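/- For each (I,J) ∈ O, the point b belongs to A_{I,J}; in particular A_{I,J} is nonempty. -/

import Mathlib

open Finset

/-- The maximum of `|z i - z j|` over `j ∈ S`, with the convention `max ∅ = 0`. -/
noncomputable def maxDist {n : ℕ} (z : Fin n → ℝ) (i : Fin n) (S : Finset (Fin n)) : ℝ :=
  if h : S.Nonempty then S.sup' h (fun j => |z i - z j|) else 0

/-- `ν^z_{I,i}`: the minimum over all subsets `S ⊆ I \ {i}` with `|S| = ⌊n/3⌋` of
`max_{j ∈ S} |z i - z j|`, with the convention `min ∅ = 0`. -/
noncomputable def nu (n : ℕ) (z : Fin n → ℝ) (I : Finset (Fin n)) (i : Fin n) : ℝ :=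
  if h : ((I.erase i).powersetCard (n / 3)).Nonempty then
    ((I.erase i).powersetCard (n / 3)).inf' h (maxDist z i)
  else 0

/-- `ν^z_I = max_{i ∈ I} ν^z_{I,i}`, with the convention `max ∅ = 0`. -/
noncomputable def nuMax (n : ℕ) (z : Fin n → ℝ) (I : Finset (Fin n)) : ℝ :=
  if h : I.Nonempty then I.sup' h (nu n z I) else 0

/-- `δ^z = (max{t₁,…,tₙ} - min{t₁,…,tₙ}) / n`. -/
noncomputable def delta (n : ℕ) (z : Fin n → ℝ) : ℝ :=
  if h : (Finset.univ : Finset (Fin n)).Nonempty then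
    (Finset.univ.sup' h z - Finset.univ.inf' h z) / n
  else 0

/-- `ẏ = (t₁, …, t_{n-1}, 0) ∈ ℝⁿ` for `y = (t₁, …, t_{n-1}) ∈ ℝ^{n-1}`. -/
def ydot (n : ℕ) (y : Fin (n - 1) → ℝ) : Fin n → ℝ :=
  fun i => if h : (i : ℕ) < n - 1 then y ⟨i, h⟩ else 0

/-- The open cube `(-1, 1)^m`, the interior of `D^m = [-1,1]^m`. -/
def IntD (m : ℕ) : Set (Fin m → ℝ) := {y | ∀ i, y i ∈ Set.Ioo (-1 : ℝ) 1}

/-- `(I, J) ∈ O`: `I` and `J` are disjoint nonempty subsets of `[n]` with `I ∪ J = [n]`,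
`|I| > n/3`, and `|J| > n/3`. -/
def memO (n : ℕ) (I J : Finset (Fin n)) : Prop :=
  I.Nonempty ∧ J.Nonempty ∧ Disjoint I J ∧ I ∪ J = Finset.univ ∧
    (n : ℝ) < 3 * I.card ∧ (n : ℝ) < 3 * J.card

/-- The set `A_{I,J}`. -/
def setAIJ (n : ℕ) (I J : Finset (Fin n)) : Set (Fin (n - 1) → ℝ) :=
  {y | y ∈ IntD (n - 1) ∧ ∀ i ∈ I, ∀ j ∈ J,
    delta n (ydot n y) < ydot n y j - ydot n y i ∧
    nu n (ydot n y) I i < delta n (ydot n y) ∧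
    nu n (ydot n y) J j < delta n (ydot n y)}

/-- The set `A = { y ∈ Int(D^{n-1}) : ν^{ẏ}_{[n]} < δ^{ẏ} }`. -/
def setA (n : ℕ) : Set (Fin (n - 1) → ℝ) :=
  {y | y ∈ IntD (n - 1) ∧ nuMax n (ydot n y) Finset.univ < delta n (ydot n y)}

/-- The point `b ∈ ℝ^{n-1}` associated to `(I, J) ∈ O`: if `n ∈ J` then `b_i = -1/2` for
`i ∈ I` and `b_j = 0` for `j ∈ J \ {n}`; if `n ∈ I` then `b_i = 0` for `i ∈ I \ {n}` and
`b_j = 1/2` for `j ∈ J`. -/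
noncomputable def bpt (n : ℕ) (I J : Finset (Fin n)) : Fin (n - 1) → ℝ :=
  fun i =>
    if (⟨n - 1, by have := i.isLt; omega⟩ : Fin n) ∈ J then
      (if Fin.castLE (Nat.sub_le n 1) i ∈ I then -(1 / 2 : ℝ) else 0)
    else
      (if Fin.castLE (Nat.sub_le n 1) i ∈ I then 0 else (1 / 2 : ℝ))

/-- For each `(I,J) ∈ O`, the point `b` belongs to `A_{I,J}`; in particular `A_{I,J}` is
nonempty. -/
lemma nu_nonpos' {n : ℕ} (z : Fin n → ℝ) (I : Finset (Fin n)) (i : Fin n)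
    (hi : i ∈ I) (hconst : ∀ a ∈ I, ∀ b ∈ I, z a = z b)
    (hcard : (n : ℝ) < 3 * I.card) : nu n z I i ≤ 0 := by
  have hcn : n < 3 * I.card := by exact_mod_cast hcard
  have hn3 : n / 3 ≤ (I.erase i).card := by
    rw [Finset.card_erase_of_mem hi]; omega
  obtain ⟨S, hS, hScard⟩ := Finset.exists_subset_card_eq hn3
  have hSmem : S ∈ (I.erase i).powersetCard (n / 3) :=
    Finset.mem_powersetCard.mpr ⟨hS, hScard⟩
  have hne : ((I.erase i).powersetCard (n / 3)).Nonempty := ⟨S, hSmem⟩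
  rw [nu, dif_pos hne]
  refine le_trans (Finset.inf'_le _ hSmem) ?_
  unfold maxDist
  split
  · apply Finset.sup'_le
    intro j hj
    have hjI : j ∈ I := Finset.mem_of_mem_erase (hS hj)
    rw [hconst i hi j hjI]
    simp
  · exact le_refl 0

lemma delta_eq' {n : ℕ} (hn : 2 ≤ n) (I J : Finset (Fin n)) (hd : Disjoint I J)
    (hI : I.Nonempty) (hJ : J.Nonempty) (c : ℝ) :
    delta n (fun k => if k ∈ I then c else c + 1/2) = 1/(2*n) := by
  have hne : (Finset.univ : Finset (Fin n)).Nonempty := by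
    obtain ⟨i, _⟩ := hI; exact ⟨i, Finset.mem_univ i⟩
  rw [delta, dif_pos hne]
  obtain ⟨i0, hi0⟩ := hI
  obtain ⟨j0, hj0⟩ := hJ
  have hj0I : j0 ∉ I := fun h => (Finset.disjoint_left.mp hd h) hj0
  have hsup : Finset.univ.sup' hne (fun k => if k ∈ I then c else c + 1/2) = c + 1/2 := by
    apply le_antisymm
    · apply Finset.sup'_le
      intro k _
      split <;> linarith
    · have := Finset.le_sup' (f := fun k => if k ∈ I then c else c + 1/2)
        (Finset.mem_univ j0)
      simp only [if_neg hj0I] at this; exact this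
  have hinf : Finset.univ.inf' hne (fun k => if k ∈ I then c else c + 1/2) = c := by
    apply le_antisymm
    · have := Finset.inf'_le (fun k => if k ∈ I then c else c + 1/2)
        (Finset.mem_univ i0)
      simp only [if_pos hi0] at this; exact this
    · apply Finset.le_inf'
      intro k _
      split <;> linarith
  rw [hsup, hinf]
  have hn0 : (0:ℝ) < n := by positivity
  field_simp
  ring
theorem stmt_3 (n : ℕ) (hn : 2 ≤ n) (I J : Finset (Fin n)) (hIJ : memO n I J) :
    bpt n I J ∈ setAIJ n I J ∧ (setAIJ n I J).Nonempty := by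
  obtain ⟨hInem, hJnem, hd, hu, hcI, hcJ⟩ := hIJ
  have hn1 : n - 1 < n := by omega
  have hmem : ∀ k : Fin n, k ∉ I ↔ k ∈ J := by
    intro k
    constructor
    · intro hk
      have hk2 : k ∈ I ∪ J := by rw [hu]; exact Finset.mem_univ k
      rcases Finset.mem_union.mp hk2 with h | h
      · exact absurd h hk
      · exact h
    · intro hk hkI
      exact (Finset.disjoint_left.mp hd hkI) hk
  obtain ⟨c, hz⟩ : ∃ c : ℝ,
      ydot n (bpt n I J) = fun k => if k ∈ I then c else c + 1/2 := by
    by_cases hlJ : (⟨n-1, hn1⟩ : Fin n) ∈ J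
    · refine ⟨-(1/2), funext fun k => ?_⟩
      simp only [ydot]
      split
      · next h =>
        simp only [bpt]
        have hcast : Fin.castLE (Nat.sub_le n 1) (⟨(k:ℕ), h⟩ : Fin (n-1)) = k :=
          Fin.ext rfl
        rw [hcast]
        split_ifs with h1 h2 h2
        · norm_num
        · norm_num
        · exact absurd hlJ h1
        · exact absurd hlJ h1
      · next h =>
        have hk : k = (⟨n-1, hn1⟩ : Fin n) := by
          apply Fin.ext
          have := k.isLt
          simp only []
          omega
        have hkI : k ∉ I := (hmem k).mpr (hk ▸ hlJ)
        rw [if_neg hkI]; norm_num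
    · have hlI : (⟨n-1, hn1⟩ : Fin n) ∈ I := by
        by_contra h; exact hlJ ((hmem _).mp h)
      refine ⟨0, funext fun k => ?_⟩
      simp only [ydot]
      split
      · next h =>
        simp only [bpt]
        have hcast : Fin.castLE (Nat.sub_le n 1) (⟨(k:ℕ), h⟩ : Fin (n-1)) = k :=
          Fin.ext rfl
        rw [hcast]
        split_ifs with h1 h2 h2
        · exact absurd h1 hlJ
        · exact absurd h1 hlJ
        · norm_num
        · norm_num
      · next h =>
        have hk : k = (⟨n-1, hn1⟩ : Fin n) := by
          apply Fin.ext
          have := k.isLt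
          simp only []
          omega
        have hkI : k ∈ I := hk ▸ hlI
        rw [if_pos hkI]
  have hnR : (2:ℝ) ≤ n := by exact_mod_cast hn
  have hd1 : (1:ℝ)/(2*n) < 1/2 := by
    rw [div_lt_div_iff₀ (by positivity) (by norm_num)]
    linarith
  have hpos : (0:ℝ) < 1/(2*n) := by positivity
  have hb : bpt n I J ∈ setAIJ n I J := by
    constructor
    · intro i
      simp only [bpt]
      split_ifs <;> constructor <;> norm_num
    · intro i hi j hj
      have hjI : j ∉ I := fun h => (Finset.disjoint_left.mp hd h) hj
      rw [hz, delta_eq' hn I J hd hInem hJnem c]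
      refine ⟨?_, ?_, ?_⟩
      · simp only [if_neg hjI, if_pos hi]
        linarith
      · have h0 := nu_nonpos' (fun k => if k ∈ I then c else c + 1/2) I i hi
          (fun a ha b hb => by simp [ha, hb]) hcI
        linarith
      · have h0 := nu_nonpos' (fun k => if k ∈ I then c else c + 1/2) J j hj
          (fun a ha b hb => by
            have haI : a ∉ I := fun h => (Finset.disjoint_left.mp hd h) ha
            have hbI : b ∉ I := fun h => (Finset.disjoint_left.mp hd h) hb
            simp [haI, hbI]) hcJ
        linarith
  exact ⟨hb, bpt n I J, hb⟩
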